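/- Let \sK = \sM \oplus \sM^\perp with orthogonal projection P onto \sM, and let B = [[B_{11}, B_{12}],[B_{12}^*, B_{22}]] \in B(\sK) be selfadjoint. For \varphi = \varphi_1 + \varphi_2 with \varphi_1 \in \sM, \varphi_2 \in \sM^\perp, the vector (I + iB)\varphi lies in \sM if and only if \varphi_2 = -i(I + iB_{22})^{-1} B_{12}^* \varphi_1, and in that case (I + iB)\varphi = C_0^{1/2}(I + iC) C_0^{1/2} \varphi_1. -/

import Mathlib

open scoped ComplexInnerProductSpace
open Complex ContinuousLinearMap

/-- Let `B = [[B₁₁, B₁₂],[B₁₂*, B₂₂]]` be a selfadjoint block operator with respect to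
`K = M ⊕ Mᗮ` (summands modelled as `M`, `M'`) and `φ = φ₁ + φ₂`.  Writing the components
of `(I+iB)φ` as `η₁ = φ₁ + iB₁₁φ₁ + iB₁₂φ₂` and `η₂ = iB₁₂*φ₁ + φ₂ + iB₂₂φ₂`, one has
`(I+iB)φ ∈ M` (i.e. `η₂ = 0`) iff `φ₂ = -i(I+iB₂₂)⁻¹B₁₂*φ₁`, and in that case
`(I+iB)φ = C₀^{1/2}(I+iC)C₀^{1/2}φ₁`.  Here `V = (I+iB₂₂)⁻¹`, `S = (I+B₂₂²)⁻¹`,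
`R = (I+B₂₂²)^{-1/2}`, `Q = C₀^{1/2}` with `C₀ = I + B₁₂SB₁₂*`, `Qi = Q⁻¹`, and
`C = Qi(B₁₁ - B₁₂RB₂₂RB₁₂*)Qi`. -/
theorem block_range_condition {M M' : Type*}
    [NormedAddCommGroup M] [InnerProductSpace ℂ M] [CompleteSpace M]
    [NormedAddCommGroup M'] [InnerProductSpace ℂ M'] [CompleteSpace M']
    (B11 : M →L[ℂ] M) (hB11 : IsSelfAdjoint B11)
    (B12 : M' →L[ℂ] M) (B22 : M' →L[ℂ] M') (hB22 : IsSelfAdjoint B22)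
    (S : M' →L[ℂ] M')
    (hS1 : (1 + B22 ∘L B22) ∘L S = 1) (hS2 : S ∘L (1 + B22 ∘L B22) = 1)
    (R : M' →L[ℂ] M') (hRsa : IsSelfAdjoint R) (hRpos : ∀ x, 0 ≤ (⟪x, R x⟫).re)
    (hRB : R ∘L B22 = B22 ∘L R) (hRR : R ∘L R = S)
    (Q : M →L[ℂ] M) (hQsa : IsSelfAdjoint Q) (hQpos : ∀ x, 0 ≤ (⟪x, Q x⟫).re)
    (hQQ : Q ∘L Q = 1 + B12 ∘L S ∘L (ContinuousLinearMap.adjoint B12))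
    (Qi : M →L[ℂ] M) (hQi1 : Q ∘L Qi = 1) (hQi2 : Qi ∘L Q = 1)
    (V : M' →L[ℂ] M')
    (hV1 : (1 + Complex.I • B22) ∘L V = 1) (hV2 : V ∘L (1 + Complex.I • B22) = 1)
    (φ1 : M) (φ2 : M') :
    (Complex.I • (ContinuousLinearMap.adjoint B12 φ1) + φ2 + Complex.I • B22 φ2 = 0
      ↔ φ2 = -(Complex.I • V (ContinuousLinearMap.adjoint B12 φ1))) ∧
    (Complex.I • (ContinuousLinearMap.adjoint B12 φ1) + φ2 + Complex.I • B22 φ2 = 0 →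
      φ1 + Complex.I • B11 φ1 + Complex.I • B12 φ2
        = Q ((1 + Complex.I •
            (Qi ∘L (B11 - B12 ∘L R ∘L B22 ∘L R ∘L (ContinuousLinearMap.adjoint B12)) ∘L Qi))
            (Q φ1))) := by
  set x := ContinuousLinearMap.adjoint B12 φ1 with hx
  -- formula for V
  have hVf : V = S - Complex.I • (B22 ∘L S) := by
    have h1 : (1 + Complex.I • B22) ∘L (S - Complex.I • (B22 ∘L S)) = 1 := by
      ext y
      have hs' := congrArg (fun f : M' →L[ℂ] M' => f y) hS1
      simp only [ContinuousLinearMap.comp_apply, ContinuousLinearMap.add_apply,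
        ContinuousLinearMap.one_apply] at hs'
      simp only [ContinuousLinearMap.comp_apply, ContinuousLinearMap.add_apply,
        ContinuousLinearMap.sub_apply, ContinuousLinearMap.smul_apply,
        ContinuousLinearMap.one_apply, map_sub, map_smul]
      linear_combination (norm := match_scalars <;> (first | ring1 | (ring_nf; simp [Complex.I_sq]))) hs'
    calc V = (V ∘L (1 + Complex.I • B22)) ∘L (S - Complex.I • (B22 ∘L S)) := by
            rw [ContinuousLinearMap.comp_assoc, h1]; ext y; simp
      _ = S - Complex.I • (B22 ∘L S) := by rw [hV2]; ext y; simp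
  have fwd : Complex.I • x + φ2 + Complex.I • B22 φ2 = 0 →
      φ2 = -(Complex.I • V x) := by
    intro h
    have h2 : (1 + Complex.I • B22) φ2 = -(Complex.I • x) := by
      simp only [ContinuousLinearMap.add_apply, ContinuousLinearMap.smul_apply,
        ContinuousLinearMap.one_apply]
      linear_combination (norm := match_scalars <;> (first | ring1 | (ring_nf; simp [Complex.I_sq]))) h
    have h3 := congrArg V h2
    rw [← ContinuousLinearMap.comp_apply, hV2] at h3
    simpa using h3
  refine ⟨⟨fwd, ?_⟩, ?_⟩
  · intro h
    subst h
    have hv := congrArg (fun f : M' →L[ℂ] M' => f x) hV1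
    simp only [ContinuousLinearMap.comp_apply, ContinuousLinearMap.add_apply,
      ContinuousLinearMap.smul_apply, ContinuousLinearMap.one_apply] at hv
    simp only [map_neg, map_smul, smul_neg, smul_smul, Complex.I_mul_I, neg_smul, one_smul,
      neg_neg]
    linear_combination (norm := match_scalars <;> (first | ring1 | (ring_nf; simp [Complex.I_sq]))) (-Complex.I) • hv
  · intro h
    have hφ2 : φ2 = -(Complex.I • V x) := fwd h
    have hVx : V x = S x - Complex.I • B22 (S x) := by
      rw [hVf]; simp
    have hQiQ : Qi (Q φ1) = φ1 := by
      have := congrArg (fun f : M →L[ℂ] M => f φ1) hQi2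
      simpa using this
    have hQQ' : Q (Q φ1) = φ1 + B12 (S x) := by
      have := congrArg (fun f : M →L[ℂ] M => f φ1) hQQ
      simpa using this
    have hRBR : R (B22 (R x)) = B22 (S x) := by
      have h1 := congrArg (fun f : M' →L[ℂ] M' => f (R x)) hRB
      have h2 := congrArg (fun f : M' →L[ℂ] M' => f x) hRR
      simp only [ContinuousLinearMap.comp_apply] at h1 h2
      rw [h1, h2]
    have hQQi : ∀ y : M, Q (Qi y) = y := by
      intro y
      have := congrArg (fun f : M →L[ℂ] M => f y) hQi1
      simpa using this
    rw [hφ2]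
    simp only [ContinuousLinearMap.add_apply, ContinuousLinearMap.smul_apply,
      ContinuousLinearMap.one_apply, ContinuousLinearMap.comp_apply,
      ContinuousLinearMap.sub_apply, map_add, map_smul, hQiQ, hQQi, hQQ', ← hx, hRBR,
      map_neg, map_sub, hVx, smul_neg, smul_sub, smul_smul, Complex.I_mul_I, neg_smul,
      one_smul, neg_neg, sub_neg_eq_add]
    match_scalars <;> (first | ring1 | (ring_nf; simp [Complex.I_sq]))
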